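/- For every natural number n ≥ 1, ∑_{k=1}^{n} (-1)^{k+1} (1/k) · C(n, k) = ∑_{k=1}^{n} 1/k, i.e. the alternating sum of binomial coefficients C(n,k) divided by k equals the n-th harmonic number. -/

import Mathlib

open Finset

lemma alt_sum_choose (n : ℕ) : ∑ k ∈ range (n + 2), (-1 : ℚ) ^ k * ((n+1).choose k) = 0 := by
  have h := Int.alternating_sum_range_choose (n := n + 1)
  simp at h
  have : ((∑ i ∈ range (n + 2), (-1 : ℤ) ^ i * ((n+1).choose i) : ℤ) : ℚ) = 0 := by
    rw [h]; simp
  push_cast at this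
  convert this using 2

lemma key (n : ℕ) :
    ∑ k ∈ range (n + 1), (-1 : ℚ) ^ k * (1 / (k + 1)) * ((n+1).choose (k+1)) =
      ∑ k ∈ range (n + 1), (1 / (k + 1) : ℚ) := by
  induction n with
  | zero => simp
  | succ n ih =>
    have split : ∀ k ∈ range (n + 2),
        (-1 : ℚ) ^ k * (1 / (k + 1)) * ((n+2).choose (k+1)) =
        (-1 : ℚ) ^ k * (1 / (k + 1)) * ((n+1).choose k)
          + (-1 : ℚ) ^ k * (1 / (k + 1)) * ((n+1).choose (k+1)) := by
      intro k _
      rw [Nat.choose_succ_succ' (n+1) k]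
      push_cast
      ring
    rw [Finset.sum_congr rfl split, Finset.sum_add_distrib]
    have hB : ∑ k ∈ range (n + 2), (-1 : ℚ) ^ k * (1 / (k + 1)) * ((n+1).choose (k+1))
        = ∑ k ∈ range (n + 1), (-1 : ℚ) ^ k * (1 / (k + 1)) * ((n+1).choose (k+1)) := by
      rw [Finset.sum_range_succ]
      simp [Nat.choose_succ_self]
    have hA : ∑ k ∈ range (n + 2), (-1 : ℚ) ^ k * (1 / (k + 1)) * ((n+1).choose k)
        = 1 / (n + 2) := by
      have step : ∀ k ∈ range (n + 2),
          (-1 : ℚ) ^ k * (1 / (k + 1)) * ((n+1).choose k)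
          = (1 / (n + 2)) * ((-1 : ℚ) ^ k * ((n+2).choose (k+1))) := by
        intro k _
        have h := Nat.add_one_mul_choose_eq (n+1) k
        have h' : ((n + 2 : ℕ) : ℚ) * ((n+1).choose k) = ((n+2).choose (k+1)) * ((k+1 : ℕ) : ℚ) := by
          exact_mod_cast congrArg (Nat.cast : ℕ → ℚ) h
        push_cast at h'
        have hk : ((k : ℚ) + 1) ≠ 0 := by positivity
        have hn2 : ((n : ℚ) + 2) ≠ 0 := by positivity
        field_simp
        linear_combination h'
      rw [Finset.sum_congr rfl step, ← Finset.mul_sum]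
      have hone : ∑ k ∈ range (n + 2), (-1 : ℚ) ^ k * ((n+2).choose (k+1)) = 1 := by
        have h0 := alt_sum_choose (n + 1)
        rw [Finset.sum_range_succ'] at h0
        simp at h0
        have hneg : ∑ k ∈ range (n + 2), (-1 : ℚ) ^ (k + 1) * ((n+2).choose (k+1)) = -1 := by
          linarith [h0]
        calc ∑ k ∈ range (n + 2), (-1 : ℚ) ^ k * ((n+2).choose (k+1))
            = -∑ k ∈ range (n + 2), (-1 : ℚ) ^ (k+1) * ((n+2).choose (k+1)) := by
              rw [← Finset.sum_neg_distrib]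
              apply Finset.sum_congr rfl; intro k _; ring
          _ = 1 := by rw [hneg]; ring
      rw [hone, mul_one]
    rw [hA, hB, ih, Finset.sum_range_succ (fun k => (1 : ℚ) / (k + 1)) (n + 1)]
    push_cast
    ring

theorem euler_case1 (n : ℕ) (hn : 1 ≤ n) :
    ∑ k ∈ Finset.Icc 1 n, (-1 : ℚ) ^ (k + 1) * (1 / k) * (n.choose k) =
      ∑ k ∈ Finset.Icc 1 n, (1 / k : ℚ) := by
  obtain ⟨m, rfl⟩ := Nat.exists_eq_add_of_le hn
  rw [show (1 + m) = m + 1 from by omega]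
  have hIcc : Finset.Icc 1 (m + 1) =
      Finset.map ⟨fun k => k + 1, add_left_injective 1⟩ (range (m + 1)) := by
    ext x
    simp only [mem_Icc, mem_map, mem_range, Function.Embedding.coeFn_mk]
    constructor
    · rintro ⟨h1, h2⟩; exact ⟨x - 1, by omega, by omega⟩
    · rintro ⟨a, ha, rfl⟩; omega
  rw [hIcc, Finset.sum_map, Finset.sum_map]
  simp only [Function.Embedding.coeFn_mk]
  have hR : ∑ x ∈ range (m + 1), (1 / ((x + 1 : ℕ)) : ℚ) =
      ∑ k ∈ range (m + 1), (1 / ((k : ℚ) + 1)) := by push_cast; rfl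
  rw [hR, ← key m]
  apply Finset.sum_congr rfl
  intro k _
  push_cast
  ring
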